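/- Let f ∈ Hol(α) be a bounded α-Hölder potential with conformal measure ν, eigenvalue λ > 0 and Hölder eigenfunction h normalized so that ∫_X h dν = 1. Then there exist constants C > 0 and s ∈ (0,1) such that for every n ∈ ℕ and uniformly in x ∈ X: 1 − 2Cs^n ≤ L_f^n 1(x)/(λ^n h(x)) ≤ 1 + 2Cs^n. Consequently, for every x ∈ X, (1/n)·log L_f^n 1(x) → log λ as n → ∞. -/

import Mathlib

open MeasureTheory Filter Topology BoundedContinuousFunction

noncomputable section

variable {E : Type*} [MetricSpace E]

/-- The metric on the sequence space `X = E^ℕ`: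
`d_X(x,y) = ∑_{n=1}^∞ 2⁻ⁿ · min(d_E(x_n,y_n), 1)`. -/
def dX (x y : ℕ → E) : ℝ :=
  ∑' n : ℕ, ((1 : ℝ) / 2) ^ (n + 1) * min (dist (x n) (y n)) 1

/-- The left shift `σ(x₁,x₂,x₃,…) = (x₂,x₃,…)`. -/
def shift (x : ℕ → E) : ℕ → E := fun n => x (n + 1)

theorem continuous_shift : Continuous (shift (E := E)) :=
  continuous_pi fun n => continuous_apply (n + 1)

/-- Prepending one symbol: `ax = (a, x₁, x₂, …)`. -/
def cons (a : E) (x : ℕ → E) : ℕ → E := fun n => Nat.casesOn n a x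

/-- Prepending a finite word `a = (a₁,…,a_n)`. -/
def prepend {n : ℕ} (a : Fin n → E) (x : ℕ → E) : ℕ → E :=
  fun k => if h : k < n then a ⟨k, h⟩ else x (k - n)

/-- Birkhoff sums `f_n = ∑_{k=0}^{n-1} f ∘ σᵏ`. -/
def birkhoff (f : (ℕ → E) → ℝ) (n : ℕ) (x : ℕ → E) : ℝ :=
  ∑ k ∈ Finset.range n, f (shift^[k] x)

/-- Boundedness of a real-valued function on `X`. -/
def Bdd (g : (ℕ → E) → ℝ) : Prop := ∃ M : ℝ, ∀ x, |g x| ≤ M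

/-- `g` is `α`-Hölder with constant `C` (w.r.t. the metric `dX`). -/
def HolderConst (α C : ℝ) (g : (ℕ → E) → ℝ) : Prop :=
  ∀ x y, |g x - g y| ≤ C * dX x y ^ α

/-- `g ∈ Hol(α)`: bounded, continuous and `α`-Hölder. -/
def MemHol (α : ℝ) (g : (ℕ → E) → ℝ) : Prop :=
  Continuous g ∧ Bdd g ∧ ∃ C : ℝ, HolderConst α C g

/-- `g ∈ C_b(X,ℝ)`: bounded and continuous. -/
def MemCb (g : (ℕ → E) → ℝ) : Prop := Continuous g ∧ Bdd g

/-- The Hölder seminorm `D_α(g) = sup_{x ≠ y} |g x - g y| / d_X(x,y)^α`. -/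
def Dalpha (α : ℝ) (g : (ℕ → E) → ℝ) : ℝ :=
  sSup {r : ℝ | ∃ x y : ℕ → E, x ≠ y ∧ r = |g x - g y| / dX x y ^ α}

/-- The supremum norm `‖g‖_∞`. -/
def supNorm (g : (ℕ → E) → ℝ) : ℝ := ⨆ x : ℕ → E, |g x|

/-- The Hölder norm `‖g‖_α = ‖g‖_∞ + D_α(g)`. -/
def alphaNorm (α : ℝ) (g : (ℕ → E) → ℝ) : ℝ := supNorm g + Dalpha α g

variable [MeasurableSpace E] [BorelSpace E]

/-- The Ruelle transfer operator `L_f φ(x) = ∫_E e^{f(ax)} φ(ax) dp(a)`. -/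
def ruelle (p : Measure E) (f φ : (ℕ → E) → ℝ) : (ℕ → E) → ℝ :=
  fun x => ∫ a, Real.exp (f (cons a x)) * φ (cons a x) ∂p

/-- The normalized operators `P^m_n(φ) = L_f^m(φ · L_f^n 1) / L_f^{m+n} 1`. -/
def Pmn (p : Measure E) (f : (ℕ → E) → ℝ) (m n : ℕ) (φ : (ℕ → E) → ℝ) : (ℕ → E) → ℝ :=
  fun x => (ruelle p f)^[m] (fun y => φ y * (ruelle p f)^[n] (fun _ => 1) y) x /
    (ruelle p f)^[m + n] (fun _ => 1) x

/-- The equivalent bounded metric `d̄(x,y) = min{1, 4 C_f d_X(x,y)^α}`. -/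
def dbar (Cf α : ℝ) (x y : ℕ → E) : ℝ := min 1 (4 * Cf * dX x y ^ α)

/-- The Wasserstein distance associated to `d̄`, via Kantorovich duality. -/
def wass (Cf α : ℝ) (μ₁ μ₂ : Measure (ℕ → E)) : ℝ :=
  sSup {r : ℝ | ∃ g : (ℕ → E) → ℝ,
    (∀ x y, |g x - g y| ≤ dbar Cf α x y) ∧ r = (∫ x, g x ∂μ₁) - ∫ x, g x ∂μ₂}

/-! ### Auxiliary development -/

section RPFaux

variable {E : Type*} [MetricSpace E]

lemma rpf_term_nonneg (x y : ℕ → E) (n : ℕ) :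
    0 ≤ ((1 : ℝ) / 2) ^ (n + 1) * min (dist (x n) (y n)) 1 := by
  have : (0:ℝ) ≤ min (dist (x n) (y n)) 1 := le_min dist_nonneg zero_le_one
  positivity

lemma rpf_term_le (x y : ℕ → E) (n : ℕ) :
    ((1 : ℝ) / 2) ^ (n + 1) * min (dist (x n) (y n)) 1 ≤ ((1:ℝ)/2)^(n+1) := by
  have h1 : min (dist (x n) (y n)) 1 ≤ 1 := min_le_right _ _
  have h2 : (0:ℝ) ≤ ((1:ℝ)/2)^(n+1) := by positivity
  nlinarith

lemma rpf_summable_half : Summable (fun n : ℕ => ((1:ℝ)/2)^(n+1)) := by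
  have := summable_geometric_of_lt_one (r := (1:ℝ)/2) (by norm_num) (by norm_num)
  exact (summable_nat_add_iff 1).2 this

lemma rpf_tsum_half : ∑' n : ℕ, ((1:ℝ)/2)^(n+1) = 1 := by
  have h : ∀ n : ℕ, ((1:ℝ)/2)^(n+1) = ((1:ℝ)/2)^n * (1/2) := fun n => pow_succ _ _
  rw [tsum_congr h, tsum_mul_right, tsum_geometric_of_lt_one (by norm_num) (by norm_num)]
  norm_num

lemma rpf_summable_dX (x y : ℕ → E) :
    Summable (fun n : ℕ => ((1 : ℝ) / 2) ^ (n + 1) * min (dist (x n) (y n)) 1) :=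
  Summable.of_nonneg_of_le (rpf_term_nonneg x y) (rpf_term_le x y) rpf_summable_half

lemma dX_nonneg (x y : ℕ → E) : 0 ≤ dX x y :=
  tsum_nonneg (rpf_term_nonneg x y)

lemma dX_le_one (x y : ℕ → E) : dX x y ≤ 1 := by
  have := Summable.tsum_le_tsum (rpf_term_le x y) (rpf_summable_dX x y) rpf_summable_half
  rwa [rpf_tsum_half] at this

lemma dX_symm (x y : ℕ → E) : dX x y = dX y x := by
  unfold dX
  congr 1
  funext n
  rw [dist_comm]

lemma dX_cons (a : E) (x y : ℕ → E) : dX (cons a x) (cons a y) = dX x y / 2 := by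
  have h0 : dX (cons a x) (cons a y) =
      ((1:ℝ)/2)^(0+1) * min (dist (cons a x 0) (cons a y 0)) 1 +
      ∑' n : ℕ, ((1:ℝ)/2)^(n+1+1) * min (dist (cons a x (n+1)) (cons a y (n+1))) 1 := by
    rw [dX]
    exact Summable.tsum_eq_zero_add (rpf_summable_dX (cons a x) (cons a y))
  have hc0 : dist (cons a x 0) (cons a y 0) = 0 := by simp [cons]
  rw [h0, hc0]
  have : ∀ n : ℕ, ((1:ℝ)/2)^(n+1+1) * min (dist (cons a x (n+1)) (cons a y (n+1))) 1
      = (1/2) * (((1:ℝ)/2)^(n+1) * min (dist (x n) (y n)) 1) := by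
    intro n
    show ((1:ℝ)/2)^(n+2) * min (dist (x n) (y n)) 1 = _
    ring
  rw [tsum_congr this, tsum_mul_left]
  simp [dX]
  ring

lemma continuous_cons_left (x : ℕ → E) : Continuous (fun a : E => cons a x) := by
  apply continuous_pi
  intro n
  cases n with
  | zero => exact continuous_id
  | succ m => exact continuous_const

lemma continuous_cons_right (a : E) : Continuous (fun x : ℕ → E => cons a x) := by
  apply continuous_pi
  intro n
  cases n with
  | zero => exact continuous_const
  | succ m => exact continuous_apply m

end RPFaux
section RPFcore
set_option linter.unusedSectionVars false

variable {E : Type*} [MetricSpace E] [MeasurableSpace E] [BorelSpace E]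

/-- The normalized kernel. -/
def kk (f h : (ℕ → E) → ℝ) (lam : ℝ) (a : E) (x : ℕ → E) : ℝ :=
  Real.exp (f (cons a x)) * h (cons a x) / (lam * h x)

/-- The normalized transfer operator. -/
def TT (p : Measure E) (f h : (ℕ → E) → ℝ) (lam : ℝ) (φ : (ℕ → E) → ℝ) : (ℕ → E) → ℝ :=
  fun x => ∫ a, φ (cons a x) * kk f h lam a x ∂p

/-- Bundled standing hypotheses. -/
structure RPFData (p : Measure E) (α : ℝ) (f h : (ℕ → E) → ℝ) (lam : ℝ)
    (Mf Df c Ch Dh : ℝ) : Prop where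
  hα0 : 0 < α
  hfc : Continuous f
  hMf : ∀ x, |f x| ≤ Mf
  hDf : HolderConst α Df f
  hDf0 : 0 ≤ Df
  hhc : Continuous h
  hc : 0 < c
  hch : ∀ x, c ≤ h x
  hhC : ∀ x, h x ≤ Ch
  hDh : HolderConst α Dh h
  hDh0 : 0 ≤ Dh
  hlam : 0 < lam
  heig : ∀ x, ruelle p f h x = lam * h x

namespace RPFData

variable {p : Measure E} {α : ℝ} {f h : (ℕ → E) → ℝ} {lam : ℝ} {Mf Df c Ch Dh : ℝ}
  (hD : RPFData p α f h lam Mf Df c Ch Dh)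

include hD

lemma hpos (x : ℕ → E) : 0 < h x := lt_of_lt_of_le hD.hc (hD.hch x)

lemma hCpos [Nonempty E] : 0 < Ch := lt_of_lt_of_le hD.hc (le_trans (hD.hch (fun _ => Classical.arbitrary E)) (hD.hhC _)) 

lemma den_pos (x : ℕ → E) : 0 < lam * h x := mul_pos hD.hlam (hD.hpos x)

lemma kk_pos (a : E) (x : ℕ → E) : 0 < kk f h lam a x := by
  apply div_pos (mul_pos (Real.exp_pos _) (hD.hpos _)) (hD.den_pos x)

lemma kk_le (a : E) (x : ℕ → E) : kk f h lam a x ≤ Real.exp Mf * Ch / (lam * c) := by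
  apply div_le_div₀ (mul_nonneg (Real.exp_pos _).le (le_trans hD.hc.le ((hD.hch x).trans (hD.hhC x))))
  · exact mul_le_mul (Real.exp_le_exp.2 (le_of_abs_le (hD.hMf _))) (hD.hhC _)
      (le_of_lt (hD.hpos _)) (le_of_lt (Real.exp_pos _))
  · exact mul_pos hD.hlam hD.hc
  · exact mul_le_mul_of_nonneg_left (hD.hch x) (le_of_lt hD.hlam)

lemma cont_kernel_a (φ : (ℕ → E) → ℝ) (hφ : Continuous φ) (x : ℕ → E) :
    Continuous (fun a : E => φ (cons a x) * kk f h lam a x) := by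
  have hc : Continuous (fun a : E => cons a x) := continuous_cons_left x
  exact ((hφ.comp hc).mul
    ((((Real.continuous_exp.comp (hD.hfc.comp hc)).mul (hD.hhc.comp hc)).div_const _)))

lemma integrable_kernel [IsProbabilityMeasure p] (φ : (ℕ → E) → ℝ) (Mφ : ℝ)
    (hφ : Continuous φ) (hMφ : ∀ y, |φ y| ≤ Mφ) (x : ℕ → E) :
    Integrable (fun a : E => φ (cons a x) * kk f h lam a x) p := by
  refine ⟨(hD.cont_kernel_a φ hφ x).aestronglyMeasurable, ?_⟩
  apply MeasureTheory.HasFiniteIntegral.of_bounded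
    (C := Mφ * (Real.exp Mf * Ch / (lam * c)))
  apply Filter.Eventually.of_forall
  intro a
  rw [Real.norm_eq_abs, abs_mul, abs_of_pos (hD.kk_pos a x)]
  exact mul_le_mul (hMφ _) (hD.kk_le a x) (le_of_lt (hD.kk_pos a x))
    (le_trans (abs_nonneg _) (hMφ (cons a x)))

lemma integrable_kk [IsProbabilityMeasure p] (x : ℕ → E) :
    Integrable (fun a : E => kk f h lam a x) p := by
  have := hD.integrable_kernel (fun _ => 1) 1 continuous_const (fun _ => by norm_num) x
  simpa using this

lemma kk_int [IsProbabilityMeasure p] (x : ℕ → E) : ∫ a, kk f h lam a x ∂p = 1 := by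
  have e1 : ∀ a, kk f h lam a x
      = (lam * h x)⁻¹ * (Real.exp (f (cons a x)) * h (cons a x)) := by
    intro a; rw [kk]; ring
  rw [show (∫ a, kk f h lam a x ∂p)
      = ∫ a, (lam * h x)⁻¹ * (Real.exp (f (cons a x)) * h (cons a x)) ∂p from
    integral_congr_ae (Filter.Eventually.of_forall e1), MeasureTheory.integral_const_mul]
  have : (∫ a, Real.exp (f (cons a x)) * h (cons a x) ∂p) = lam * h x := hD.heig x
  rw [this, inv_mul_cancel₀ (ne_of_gt (hD.den_pos x))]

end RPFData

end RPFcore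
section RPFcore2
set_option linter.unusedSectionVars false

variable {E : Type*} [MetricSpace E] [MeasurableSpace E] [BorelSpace E]

/-- `(1/2)^α`, the per-step contraction of `dX`-Hölder seminorms. -/
def βe (α : ℝ) : ℝ := ((1:ℝ)/2) ^ α

lemma βe_pos (α : ℝ) : 0 < βe α := Real.rpow_pos_of_pos (by norm_num) α

lemma βe_lt_one {α : ℝ} (hα : 0 < α) : βe α < 1 :=
  Real.rpow_lt_one (by norm_num) (by norm_num) hα

lemma dX_cons_rpow (α : ℝ) (a : E) (x y : ℕ → E) :
    dX (cons a x) (cons a y) ^ α = βe α * dX x y ^ α := by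
  rw [dX_cons]
  have e : dX x y / 2 = (1/2) * dX x y := by ring
  rw [e, Real.mul_rpow (by norm_num) (dX_nonneg x y)]
  rfl

lemma dX_rpow_nonneg (α : ℝ) (x y : ℕ → E) : 0 ≤ dX x y ^ α :=
  Real.rpow_nonneg (dX_nonneg x y) α

lemma dX_rpow_le_one {α : ℝ} (hα : 0 < α) (x y : ℕ → E) : dX x y ^ α ≤ 1 :=
  Real.rpow_le_one (dX_nonneg x y) (dX_le_one x y) hα.le

lemma abs_le_max_of_between {φ : (ℕ → E) → ℝ} {m M : ℝ}
    (h1 : ∀ y, m ≤ φ y) (h2 : ∀ y, φ y ≤ M) (y : ℕ → E) : |φ y| ≤ max |m| |M| :=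
  abs_le.2 ⟨le_trans (neg_le_neg (le_max_left _ _)) (le_trans (neg_abs_le m) (h1 y)),
    le_trans (h2 y) (le_trans (le_abs_self M) (le_max_right _ _))⟩

/-- The one-step Hölder ratio constant. -/
def Gc (α Df Dh c : ℝ) : ℝ := βe α * Df + (βe α + 1) * (Dh / c)

/-- The accumulated Hölder ratio constant. -/
def cinf (α Df Dh c : ℝ) : ℝ := Gc α Df Dh c / (1 - βe α)

namespace RPFData

variable {p : Measure E} {α : ℝ} {f h : (ℕ → E) → ℝ} {lam : ℝ} {Mf Df c Ch Dh : ℝ}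
  (hD : RPFData p α f h lam Mf Df c Ch Dh)

include hD

lemma Gc_nonneg : 0 ≤ Gc α Df Dh c := by
  have h1 := βe_pos α
  have h5 : 0 ≤ Dh / c := div_nonneg hD.hDh0 hD.hc.le
  have h6 : (0:ℝ) ≤ βe α * Df := mul_nonneg h1.le hD.hDf0
  have h7 : (0:ℝ) ≤ (βe α + 1) * (Dh / c) := mul_nonneg (by linarith) h5
  rw [Gc]
  linarith

lemma cinf_nonneg : 0 ≤ cinf α Df Dh c :=
  div_nonneg hD.Gc_nonneg (by linarith [βe_lt_one hD.hα0])

lemma Gc_cinf : Gc α Df Dh c + βe α * cinf α Df Dh c = cinf α Df Dh c := by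
  have hb : 1 - βe α ≠ 0 := by linarith [βe_lt_one hD.hα0]
  rw [cinf]
  field_simp
  ring

lemma kk_ratio (a : E) (x y : ℕ → E) :
    kk f h lam a x ≤ Real.exp (Gc α Df Dh c * dX x y ^ α) * kk f h lam a y := by
  set t := dX x y ^ α with hts
  have ht0 : 0 ≤ t := dX_rpow_nonneg α x y
  have hβ := βe_pos α
  have hβt0 : 0 ≤ βe α * t := mul_nonneg hβ.le ht0
  have hdc : dX (cons a x) (cons a y) ^ α = βe α * t := dX_cons_rpow α a x y
  -- ingredient A
  have hA : Real.exp (f (cons a x))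
      ≤ Real.exp (Df * (βe α * t)) * Real.exp (f (cons a y)) := by
    rw [← Real.exp_add]
    apply Real.exp_le_exp.2
    have := hD.hDf (cons a x) (cons a y)
    rw [hdc] at this
    have := le_of_abs_le this
    linarith
  -- ingredient B
  have hB : h (cons a x) ≤ Real.exp (Dh / c * (βe α * t)) * h (cons a y) := by
    have h1 : h (cons a x) ≤ h (cons a y) + Dh * (βe α * t) := by
      have hh' := hD.hDh (cons a x) (cons a y)
      rw [hdc] at hh'
      have := le_of_abs_le hh'
      linarith
    have h2 : Dh * (βe α * t) ≤ h (cons a y) * (Dh / c * (βe α * t)) := by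
      rw [show h (cons a y) * (Dh / c * (βe α * t)) = (h (cons a y) / c) * (Dh * (βe α * t)) by ring]
      have hr : (1:ℝ) ≤ h (cons a y) / c := (one_le_div hD.hc).2 (hD.hch _)
      nlinarith [mul_nonneg hD.hDh0 hβt0]
    have h3 : (1:ℝ) + Dh / c * (βe α * t) ≤ Real.exp (Dh / c * (βe α * t)) := by
      have := Real.add_one_le_exp (Dh / c * (βe α * t)); linarith
    have h4 : 0 < h (cons a y) := hD.hpos _
    calc h (cons a x) ≤ h (cons a y) + h (cons a y) * (Dh / c * (βe α * t)) := by linarith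
      _ = h (cons a y) * (1 + Dh / c * (βe α * t)) := by ring
      _ ≤ h (cons a y) * Real.exp (Dh / c * (βe α * t)) :=
          mul_le_mul_of_nonneg_left h3 h4.le
      _ = _ := by ring
  -- ingredient C
  have key : lam * h y ≤ Real.exp (Dh / c * t) * (lam * h x) := by
    have h1 : h y ≤ h x + Dh * t := by
      have hh' := hD.hDh y x
      rw [dX_symm y x] at hh'
      have := le_of_abs_le hh'
      linarith
    have h2 : Dh * t ≤ h x * (Dh / c * t) := by
      rw [show h x * (Dh / c * t) = (h x / c) * (Dh * t) by ring]
      have hr : (1:ℝ) ≤ h x / c := (one_le_div hD.hc).2 (hD.hch _)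
      nlinarith [mul_nonneg hD.hDh0 ht0]
    have h3 : (1:ℝ) + Dh / c * t ≤ Real.exp (Dh / c * t) := by
      have := Real.add_one_le_exp (Dh / c * t); linarith
    have h4 : h y ≤ h x * Real.exp (Dh / c * t) := by
      calc h y ≤ h x + h x * (Dh / c * t) := by linarith
        _ = h x * (1 + Dh / c * t) := by ring
        _ ≤ h x * Real.exp (Dh / c * t) := mul_le_mul_of_nonneg_left h3 (hD.hpos x).le
    nlinarith [hD.hlam]
  -- combine
  have hx0 := hD.den_pos x
  have hy0 := hD.den_pos y
  have e1 : Real.exp (Df * (βe α * t)) * Real.exp (Dh / c * (βe α * t)) * Real.exp (Dh / c * t)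
      = Real.exp (Gc α Df Dh c * t) := by
    rw [← Real.exp_add, ← Real.exp_add, Gc]
    congr 1
    ring
  have n2 : (0:ℝ) ≤ h (cons a x) := (hD.hpos _).le
  have n4 : (0:ℝ) ≤ Real.exp (Df * (βe α * t)) * Real.exp (f (cons a y)) := by positivity
  have n5 : (0:ℝ) ≤ (Real.exp (Df * (βe α * t)) * Real.exp (f (cons a y)))
      * (Real.exp (Dh / c * (βe α * t)) * h (cons a y)) := by
    have := (hD.hpos (cons a y)).le; positivity
  have step : (Real.exp (f (cons a x)) * h (cons a x)) * (lam * h y) ≤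
      ((Real.exp (Df * (βe α * t)) * Real.exp (f (cons a y)))
        * (Real.exp (Dh / c * (βe α * t)) * h (cons a y)))
      * (Real.exp (Dh / c * t) * (lam * h x)) :=
    mul_le_mul (mul_le_mul hA hB n2 n4) key (hD.den_pos y).le n5
  rw [show Real.exp (Gc α Df Dh c * t) * kk f h lam a y
      = (Real.exp (Gc α Df Dh c * t) * (Real.exp (f (cons a y)) * h (cons a y))) / (lam * h y)
    from by rw [kk]; ring]
  rw [kk, div_le_div_iff₀ hx0 hy0]
  calc Real.exp (f (cons a x)) * h (cons a x) * (lam * h y) ≤ _ := step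
    _ = Real.exp (Gc α Df Dh c * t) * (Real.exp (f (cons a y)) * h (cons a y)) * (lam * h x) := by
        rw [← e1]; ring

end RPFData

end RPFcore2
section RPFcore3
set_option linter.unusedSectionVars false

variable {E : Type*} [MetricSpace E] [MeasurableSpace E] [BorelSpace E]

namespace RPFData

variable {p : Measure E} {α : ℝ} {f h : (ℕ → E) → ℝ} {lam : ℝ} {Mf Df c Ch Dh : ℝ}
  (hD : RPFData p α f h lam Mf Df c Ch Dh)

include hD

/-- integrability for the two-point kernel products -/
lemma integrable_kernel₂ [IsProbabilityMeasure p] (φ : (ℕ → E) → ℝ) (Mφ : ℝ)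
    (hφ : Continuous φ) (hMφ : ∀ y, |φ y| ≤ Mφ) (x y : ℕ → E) :
    Integrable (fun a : E => φ (cons a x) * kk f h lam a y) p := by
  have hcx : Continuous (fun a : E => cons a x) := continuous_cons_left x
  have hcy : Continuous (fun a : E => cons a y) := continuous_cons_left y
  refine ⟨Continuous.aestronglyMeasurable ?_, ?_⟩
  · exact (hφ.comp hcx).mul
      ((((Real.continuous_exp.comp (hD.hfc.comp hcy)).mul (hD.hhc.comp hcy)).div_const _))
  · apply MeasureTheory.HasFiniteIntegral.of_bounded
      (C := Mφ * (Real.exp Mf * Ch / (lam * c)))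
    apply Filter.Eventually.of_forall
    intro a
    rw [Real.norm_eq_abs, abs_mul, abs_of_pos (hD.kk_pos a y)]
    exact mul_le_mul (hMφ _) (hD.kk_le a y) (le_of_lt (hD.kk_pos a y))
      (le_trans (abs_nonneg _) (hMφ (cons a x)))

lemma TT_le [IsProbabilityMeasure p] (φ : (ℕ → E) → ℝ) (m M : ℝ)
    (hφ : Continuous φ) (h1 : ∀ y, m ≤ φ y) (h2 : ∀ y, φ y ≤ M) (x : ℕ → E) :
    TT p f h lam φ x ≤ M := by
  have habs := abs_le_max_of_between h1 h2
  have hint1 := hD.integrable_kernel φ (max |m| |M|) hφ habs x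
  have hint2 := (hD.integrable_kk x).const_mul M
  have mono : TT p f h lam φ x ≤ ∫ a, M * kk f h lam a x ∂p := by
    apply integral_mono hint1 hint2
    intro a
    exact mul_le_mul_of_nonneg_right (h2 _) (hD.kk_pos a x).le
  calc TT p f h lam φ x ≤ ∫ a, M * kk f h lam a x ∂p := mono
    _ = M := by rw [MeasureTheory.integral_const_mul, hD.kk_int]; ring

lemma TT_ge [IsProbabilityMeasure p] (φ : (ℕ → E) → ℝ) (m M : ℝ)
    (hφ : Continuous φ) (h1 : ∀ y, m ≤ φ y) (h2 : ∀ y, φ y ≤ M) (x : ℕ → E) :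
    m ≤ TT p f h lam φ x := by
  have habs := abs_le_max_of_between h1 h2
  have hint1 := hD.integrable_kernel φ (max |m| |M|) hφ habs x
  have hint2 := (hD.integrable_kk x).const_mul m
  have mono : (∫ a, m * kk f h lam a x ∂p) ≤ TT p f h lam φ x := by
    apply integral_mono hint2 hint1
    intro a
    exact mul_le_mul_of_nonneg_right (h1 _) (hD.kk_pos a x).le
  calc m = ∫ a, m * kk f h lam a x ∂p := by
        rw [MeasureTheory.integral_const_mul, hD.kk_int]; ring
    _ ≤ TT p f h lam φ x := mono

lemma TT_add_const [IsProbabilityMeasure p] (φ : (ℕ → E) → ℝ) (Mφ r : ℝ)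
    (hφ : Continuous φ) (hMφ : ∀ y, |φ y| ≤ Mφ) (x : ℕ → E) :
    TT p f h lam (fun y => φ y + r) x = TT p f h lam φ x + r := by
  have e : ∀ a : E, (φ (cons a x) + r) * kk f h lam a x
      = φ (cons a x) * kk f h lam a x + r * kk f h lam a x := fun a => by ring
  show (∫ a, (φ (cons a x) + r) * kk f h lam a x ∂p) = _
  rw [integral_congr_ae (Filter.Eventually.of_forall e),
    integral_add (hD.integrable_kernel φ Mφ hφ hMφ x) ((hD.integrable_kk x).const_mul r),
    MeasureTheory.integral_const_mul, hD.kk_int]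
  rw [show TT p f h lam φ x = ∫ a, φ (cons a x) * kk f h lam a x ∂p from rfl]
  ring

lemma TT_cont [IsProbabilityMeasure p] (φ : (ℕ → E) → ℝ) (Mφ : ℝ)
    (hφ : Continuous φ) (hMφ : ∀ y, |φ y| ≤ Mφ) :
    Continuous (TT p f h lam φ) := by
  apply MeasureTheory.continuous_of_dominated
    (bound := fun _ => Mφ * (Real.exp Mf * Ch / (lam * c)))
  · intro x
    exact (hD.cont_kernel_a φ hφ x).aestronglyMeasurable
  · intro x
    apply Filter.Eventually.of_forall
    intro a
    rw [Real.norm_eq_abs, abs_mul, abs_of_pos (hD.kk_pos a x)]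
    exact mul_le_mul (hMφ _) (hD.kk_le a x) (hD.kk_pos a x).le
      ((abs_nonneg (φ (cons a x))).trans (hMφ (cons a x)))
  · exact MeasureTheory.integrable_const _
  · apply Filter.Eventually.of_forall
    intro a
    have hcr : Continuous (fun x : ℕ → E => cons a x) := continuous_cons_right a
    refine (hφ.comp hcr).mul ?_
    exact Continuous.div
      ((Real.continuous_exp.comp (hD.hfc.comp hcr)).mul (hD.hhc.comp hcr))
      (continuous_const.mul hD.hhc) (fun x => (hD.den_pos x).ne')

lemma TT_iter_reg [IsProbabilityMeasure p] (φ : (ℕ → E) → ℝ) (m M : ℝ)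
    (hφ : Continuous φ) (h1 : ∀ y, m ≤ φ y) (h2 : ∀ y, φ y ≤ M) (N : ℕ) :
    Continuous ((TT p f h lam)^[N] φ) ∧ (∀ y, m ≤ (TT p f h lam)^[N] φ y)
      ∧ (∀ y, (TT p f h lam)^[N] φ y ≤ M) := by
  induction N with
  | zero => exact ⟨hφ, h1, h2⟩
  | succ N ih =>
    obtain ⟨ic, i1, i2⟩ := ih
    rw [Function.iterate_succ_apply']
    exact ⟨hD.TT_cont _ (max |m| |M|) ic (abs_le_max_of_between i1 i2),
      fun y => hD.TT_ge _ m M ic i1 i2 y, fun y => hD.TT_le _ m M ic i1 i2 y⟩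

lemma TT_holder [IsProbabilityMeasure p] (φ : (ℕ → E) → ℝ) (Mφ D : ℝ)
    (hφ : Continuous φ) (hMφ : ∀ y, |φ y| ≤ Mφ) (hHol : HolderConst α D φ)
    (hD0 : 0 ≤ D) (hM0 : 0 ≤ Mφ) :
    HolderConst α (βe α * D + Mφ * (Gc α Df Dh c * Real.exp (Gc α Df Dh c)))
      (TT p f h lam φ) := by
  intro x y
  set t := dX x y ^ α with hts
  have ht0 : 0 ≤ t := dX_rpow_nonneg α x y
  have ht1 : t ≤ 1 := dX_rpow_le_one hD.hα0 x y
  have hG0 := hD.Gc_nonneg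
  have hGt0 : 0 ≤ Gc α Df Dh c * t := mul_nonneg hG0 ht0
  have hdc : ∀ a : E, dX (cons a x) (cons a y) ^ α = βe α * t := fun a => dX_cons_rpow α a x y
  have hkabs : ∀ a : E, |kk f h lam a x - kk f h lam a y|
      ≤ (Real.exp (Gc α Df Dh c * t) - 1) * kk f h lam a y := by
    intro a
    have r1 := hD.kk_ratio a x y
    have r2 := hD.kk_ratio a y x
    rw [dX_symm y x] at r2
    have he : 1 ≤ Real.exp (Gc α Df Dh c * t) := Real.one_le_exp hGt0
    have hky := hD.kk_pos a y
    have hkx := hD.kk_pos a x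
    rw [abs_le]
    constructor
    · nlinarith [sq_nonneg (Real.exp (Gc α Df Dh c * t) - 1), hky.le, hkx.le]
    · nlinarith
  have hpt : ∀ a : E, |φ (cons a x) * kk f h lam a x - φ (cons a y) * kk f h lam a y|
      ≤ D * (βe α * t) * kk f h lam a x
        + Mφ * ((Real.exp (Gc α Df Dh c * t) - 1) * kk f h lam a y) := by
    intro a
    have e1 : φ (cons a x) * kk f h lam a x - φ (cons a y) * kk f h lam a y
        = (φ (cons a x) - φ (cons a y)) * kk f h lam a x
          + φ (cons a y) * (kk f h lam a x - kk f h lam a y) := by ring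
    rw [e1]
    calc |_ + _| ≤ |(φ (cons a x) - φ (cons a y)) * kk f h lam a x|
          + |φ (cons a y) * (kk f h lam a x - kk f h lam a y)| := abs_add_le _ _
      _ ≤ D * (βe α * t) * kk f h lam a x
          + Mφ * ((Real.exp (Gc α Df Dh c * t) - 1) * kk f h lam a y) := by
        apply add_le_add
        · rw [abs_mul, abs_of_pos (hD.kk_pos a x)]
          apply mul_le_mul_of_nonneg_right _ (hD.kk_pos a x).le
          have := hHol (cons a x) (cons a y)
          rwa [hdc a] at this
        · rw [abs_mul]
          apply mul_le_mul (hMφ _) (hkabs a) (abs_nonneg _) hM0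
  have hintx := hD.integrable_kernel φ Mφ hφ hMφ x
  have hinty := hD.integrable_kernel φ Mφ hφ hMφ y
  have hintRHS : Integrable (fun a : E => D * (βe α * t) * kk f h lam a x
      + Mφ * ((Real.exp (Gc α Df Dh c * t) - 1) * kk f h lam a y)) p := by
    apply Integrable.add ((hD.integrable_kk x).const_mul _)
    have := (hD.integrable_kk y).const_mul (Mφ * (Real.exp (Gc α Df Dh c * t) - 1))
    apply this.congr
    apply Filter.Eventually.of_forall
    intro a; ring
  have key : |TT p f h lam φ x - TT p f h lam φ y|
      ≤ D * (βe α * t) + Mφ * (Real.exp (Gc α Df Dh c * t) - 1) := by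
    have e2 : TT p f h lam φ x - TT p f h lam φ y
        = ∫ a, (φ (cons a x) * kk f h lam a x - φ (cons a y) * kk f h lam a y) ∂p := by
      rw [integral_sub hintx hinty]; rfl
    rw [e2]
    calc |∫ a, (φ (cons a x) * kk f h lam a x - φ (cons a y) * kk f h lam a y) ∂p|
        ≤ ∫ a, |φ (cons a x) * kk f h lam a x - φ (cons a y) * kk f h lam a y| ∂p := by
          simpa [Real.norm_eq_abs] using
            norm_integral_le_integral_norm
              (fun a : E => φ (cons a x) * kk f h lam a x - φ (cons a y) * kk f h lam a y) (μ := p)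
      _ ≤ ∫ a, (D * (βe α * t) * kk f h lam a x
          + Mφ * ((Real.exp (Gc α Df Dh c * t) - 1) * kk f h lam a y)) ∂p :=
          integral_mono (hintx.sub hinty).abs hintRHS hpt
      _ = D * (βe α * t) + Mφ * (Real.exp (Gc α Df Dh c * t) - 1) := by
          rw [integral_add ((hD.integrable_kk x).const_mul _)]
          · rw [MeasureTheory.integral_const_mul, hD.kk_int]
            have : (∫ a, Mφ * ((Real.exp (Gc α Df Dh c * t) - 1) * kk f h lam a y) ∂p)
                = Mφ * ((Real.exp (Gc α Df Dh c * t) - 1) * ∫ a, kk f h lam a y ∂p) := by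
              rw [MeasureTheory.integral_const_mul, MeasureTheory.integral_const_mul]
            rw [this, hD.kk_int]
            ring
          · have := (hD.integrable_kk y).const_mul (Mφ * (Real.exp (Gc α Df Dh c * t) - 1))
            apply this.congr
            apply Filter.Eventually.of_forall
            intro a; ring
  -- final numeric bound
  have hexp : Real.exp (Gc α Df Dh c * t) - 1
      ≤ Gc α Df Dh c * Real.exp (Gc α Df Dh c) * t := by
    set u := Gc α Df Dh c * t with hu
    have hu0 : 0 ≤ u := hGt0
    have h1 : Real.exp u - 1 ≤ u * Real.exp u := by
      have hone := Real.add_one_le_exp (-u)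
      have hprod : Real.exp (-u) * Real.exp u = 1 := by
        rw [← Real.exp_add]; simp
      nlinarith [Real.exp_pos u]
    have h2 : Real.exp u ≤ Real.exp (Gc α Df Dh c) :=
      Real.exp_le_exp.2 (mul_le_of_le_one_right hG0 ht1)
    calc Real.exp u - 1 ≤ u * Real.exp u := h1
      _ ≤ u * Real.exp (Gc α Df Dh c) := mul_le_mul_of_nonneg_left h2 hu0
      _ = Gc α Df Dh c * Real.exp (Gc α Df Dh c) * t := by rw [hu]; ring
  calc |TT p f h lam φ x - TT p f h lam φ y|
      ≤ D * (βe α * t) + Mφ * (Real.exp (Gc α Df Dh c * t) - 1) := key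
    _ ≤ D * (βe α * t) + Mφ * (Gc α Df Dh c * Real.exp (Gc α Df Dh c) * t) := by
        have := mul_le_mul_of_nonneg_left hexp hM0
        linarith
    _ = (βe α * D + Mφ * (Gc α Df Dh c * Real.exp (Gc α Df Dh c))) * t := by ring

end RPFData

end RPFcore3
section RPFcore4
set_option linter.unusedSectionVars false

variable {E : Type*} [MetricSpace E] [MeasurableSpace E] [BorelSpace E]

namespace RPFData

variable {p : Measure E} {α : ℝ} {f h : (ℕ → E) → ℝ} {lam : ℝ} {Mf Df c Ch Dh : ℝ}
  (hD : RPFData p α f h lam Mf Df c Ch Dh)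

include hD

lemma TT_doeblin [IsProbabilityMeasure p] (φ : (ℕ → E) → ℝ) (M D : ℝ)
    (hφ : Continuous φ) (h0 : ∀ y, 0 ≤ φ y) (h2 : ∀ y, φ y ≤ M)
    (hHol : HolderConst α D φ) (hD0 : 0 ≤ D) :
    ∀ (N : ℕ) (x y : ℕ → E),
      Real.exp (-(cinf α Df Dh c * dX x y ^ α)) * ((TT p f h lam)^[N] φ y)
        - D * βe α ^ N * dX x y ^ α ≤ (TT p f h lam)^[N] φ x := by
  intro N
  induction N with
  | zero =>
    intro x y
    simp only [Function.iterate_zero, id_eq, pow_zero, mul_one]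
    have ht0 : 0 ≤ dX x y ^ α := dX_rpow_nonneg α x y
    have hexp1 : Real.exp (-(cinf α Df Dh c * dX x y ^ α)) ≤ 1 :=
      Real.exp_le_one_iff.2 (by nlinarith [hD.cinf_nonneg])
    have h1 : φ y - D * dX x y ^ α ≤ φ x := by
      have hh' := hHol y x
      rw [dX_symm y x] at hh'
      have := le_of_abs_le hh'
      linarith
    have h2' : Real.exp (-(cinf α Df Dh c * dX x y ^ α)) * φ y ≤ φ y :=
      mul_le_of_le_one_left (h0 y) hexp1
    linarith
  | succ N ih =>
    intro x y
    set TN := (TT p f h lam)^[N] φ with hTN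
    obtain ⟨regC, reg0, regM⟩ := hD.TT_iter_reg φ 0 M hφ h0 h2 N
    have habs : ∀ z, |TN z| ≤ max |(0:ℝ)| |M| := abs_le_max_of_between reg0 regM
    set t := dX x y ^ α with hts
    have ht0 : 0 ≤ t := dX_rpow_nonneg α x y
    have hβ := βe_pos α
    have hβt0 : 0 ≤ βe α * t := mul_nonneg hβ.le ht0
    rw [Function.iterate_succ_apply', ← hTN]
    set e' := Real.exp (-(Gc α Df Dh c * t)) with he'
    set A := Real.exp (-(cinf α Df Dh c * (βe α * t))) with hA
    set B := D * βe α ^ N * (βe α * t) with hB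
    have he'pos : 0 < e' := Real.exp_pos _
    have he'le : e' ≤ 1 := by
      rw [he']
      exact Real.exp_le_one_iff.2 (by nlinarith [mul_nonneg hD.Gc_nonneg ht0])
    have hxy : ∀ a : E, e' * kk f h lam a y ≤ kk f h lam a x := by
      intro a
      rw [he', Real.exp_neg, inv_mul_le_iff₀ (Real.exp_pos _)]
      have hr := hD.kk_ratio a y x
      rwa [dX_symm y x] at hr
    have int2 := hD.integrable_kernel TN (max |(0:ℝ)| |M|) regC habs x
    have int1 : Integrable (fun a : E => TN (cons a x) * (e' * kk f h lam a y)) p := by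
      have hi := (hD.integrable_kernel₂ TN (max |(0:ℝ)| |M|) regC habs x y).const_mul e'
      apply hi.congr
      exact Filter.Eventually.of_forall (fun a => by ring)
    have step1 : (∫ a, TN (cons a x) * (e' * kk f h lam a y) ∂p) ≤ TT p f h lam TN x := by
      apply integral_mono int1 int2
      intro a
      exact mul_le_mul_of_nonneg_left (hxy a) (reg0 (cons a x))
    have ihpt : ∀ a : E, (A * TN (cons a y) - B) * (e' * kk f h lam a y)
        ≤ TN (cons a x) * (e' * kk f h lam a y) := by
      intro a
      apply mul_le_mul_of_nonneg_right _ (mul_nonneg he'pos.le (hD.kk_pos a y).le)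
      have hih := ih (cons a x) (cons a y)
      rw [dX_cons_rpow α a x y, ← hts, ← hA, ← hB] at hih
      exact hih
    have int3 : Integrable (fun a : E => (A * TN (cons a y) - B) * (e' * kk f h lam a y)) p := by
      have i1 := (hD.integrable_kernel TN (max |(0:ℝ)| |M|) regC habs y).const_mul (A * e')
      have i2 := (hD.integrable_kk y).const_mul (B * e')
      apply (i1.sub i2).congr
      exact Filter.Eventually.of_forall (fun a => by simp only [Pi.sub_apply]; ring)
    have hval : (∫ a, (A * TN (cons a y) - B) * (e' * kk f h lam a y) ∂p)
        = A * e' * TT p f h lam TN y - B * e' := by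
      have e2 : ∀ a : E, (A * TN (cons a y) - B) * (e' * kk f h lam a y)
          = (A * e') * (TN (cons a y) * kk f h lam a y) - (B * e') * kk f h lam a y :=
        fun a => by ring
      rw [integral_congr_ae (Filter.Eventually.of_forall e2),
        integral_sub ((hD.integrable_kernel TN (max |(0:ℝ)| |M|) regC habs y).const_mul (A * e'))
          ((hD.integrable_kk y).const_mul (B * e')),
        MeasureTheory.integral_const_mul, MeasureTheory.integral_const_mul, hD.kk_int]
      rw [show TT p f h lam TN y = ∫ a, TN (cons a y) * kk f h lam a y ∂p from rfl]
      ring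
    have step2 : A * e' * TT p f h lam TN y - B * e'
        ≤ ∫ a, TN (cons a x) * (e' * kk f h lam a y) ∂p := by
      have hint := integral_mono int3 int1 ihpt
      rw [hval] at hint
      exact hint
    have hAe : A * e' = Real.exp (-(cinf α Df Dh c * t)) := by
      rw [hA, he', ← Real.exp_add]
      congr 1
      linear_combination (-t) * hD.Gc_cinf
    have hBle : B * e' ≤ D * βe α ^ (N + 1) * t := by
      have hB0 : (0:ℝ) ≤ B := by
        rw [hB]
        exact mul_nonneg (mul_nonneg hD0 (pow_nonneg hβ.le N)) hβt0
      calc B * e' ≤ B * 1 := mul_le_mul_of_nonneg_left he'le hB0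
        _ = D * βe α ^ (N + 1) * t := by rw [hB, pow_succ]; ring
    calc Real.exp (-(cinf α Df Dh c * t)) * TT p f h lam TN y - D * βe α ^ (N + 1) * t
        ≤ A * e' * TT p f h lam TN y - B * e' := by rw [hAe]; linarith
      _ ≤ ∫ a, TN (cons a x) * (e' * kk f h lam a y) ∂p := step2
      _ ≤ TT p f h lam TN x := step1

lemma ruelle_TT (φ : (ℕ → E) → ℝ) (x : ℕ → E) :
    ruelle p f (fun y => h y * φ y) x = lam * h x * TT p f h lam φ x := by
  have hden : lam * h x ≠ 0 := (hD.den_pos x).ne'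
  rw [show TT p f h lam φ x = ∫ a, φ (cons a x) * kk f h lam a x ∂p from rfl,
    ← MeasureTheory.integral_const_mul]
  show (∫ a, Real.exp (f (cons a x)) * (h (cons a x) * φ (cons a x)) ∂p) = _
  apply integral_congr_ae
  apply Filter.Eventually.of_forall
  intro a
  simp only [kk]
  field_simp
  rw [mul_assoc (h (cons a x) * φ (cons a x)) lam (h x), mul_div_assoc, div_self hden, mul_one]

end RPFData

end RPFcore4
set_option maxHeartbeats 1000000 in
theorem statement9 {E : Type*} [MetricSpace E] [CompleteSpace E]
    [TopologicalSpace.SeparableSpace E] [MeasurableSpace E] [BorelSpace E] [Nonempty E]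
    (p : Measure E) [IsProbabilityMeasure p]
    (α : ℝ) (hα0 : 0 < α) (hα1 : α < 1)
    (f : (ℕ → E) → ℝ) (hf : MemHol α f)
    (ν : Measure (ℕ → E)) (hν : IsProbabilityMeasure ν) (lam : ℝ) (hlam : 0 < lam)
    (hconf : ∀ φ : (ℕ → E) → ℝ, MemCb φ →
      (∫ x, ruelle p f φ x ∂ν) = lam * ∫ x, φ x ∂ν)
    (h : (ℕ → E) → ℝ) (hh : MemHol α h)
    (hbd : ∃ c C : ℝ, 0 < c ∧ (∀ x, c ≤ h x) ∧ ∀ x, h x ≤ C)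
    (heig : ∀ x, ruelle p f h x = lam * h x)
    (hnorm : (∫ x, h x ∂ν) = 1) :
    (∃ C s : ℝ, 0 < C ∧ 0 < s ∧ s < 1 ∧ ∀ (n : ℕ) (x : ℕ → E),
      1 - 2 * C * s ^ n ≤ (ruelle p f)^[n] (fun _ => 1) x / (lam ^ n * h x) ∧
      (ruelle p f)^[n] (fun _ => 1) x / (lam ^ n * h x) ≤ 1 + 2 * C * s ^ n) ∧
    ∀ x : ℕ → E, Tendsto
      (fun n : ℕ => (1 / (n : ℝ)) * Real.log ((ruelle p f)^[n] (fun _ => 1) x))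
      atTop (nhds (Real.log lam)) := by
  classical
  haveI : SecondCountableTopology E := UniformSpace.secondCountable_of_separable E
  haveI := hν
  haveI : Nonempty (ℕ → E) := ⟨fun _ => Classical.arbitrary E⟩
  obtain ⟨hfc, ⟨Mf, hMf⟩, Df0, hDf0⟩ := hf
  obtain ⟨hhc, hBddh, Dh0, hDh0⟩ := hh
  obtain ⟨c, Ch, hc, hch, hhC⟩ := hbd
  set Df := max Df0 0 with hDfdef
  set Dh := max Dh0 0 with hDhdef
  have hDf : HolderConst α Df f := fun x y =>
    le_trans (hDf0 x y) (mul_le_mul_of_nonneg_right (le_max_left _ _) (dX_rpow_nonneg α x y))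
  have hDh : HolderConst α Dh h := fun x y =>
    le_trans (hDh0 x y) (mul_le_mul_of_nonneg_right (le_max_left _ _) (dX_rpow_nonneg α x y))
  have hD : RPFData p α f h lam Mf Df c Ch Dh :=
    ⟨hα0, hfc, hMf, hDf, le_max_right _ _, hhc, hc, hch, hhC, hDh, le_max_right _ _, hlam, heig⟩
  have hpos : ∀ x, 0 < h x := hD.hpos
  -- the normalized operator and normalized iterates
  set T := TT p f h lam with hT
  set ψ : (ℕ → E) → ℝ := fun x => (h x)⁻¹ with hψ
  set u : ℕ → (ℕ → E) → ℝ := fun n => T^[n] ψ with hu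
  have hψc : Continuous ψ := hhc.inv₀ (fun x => (hpos x).ne')
  have hψlb : ∀ x, Ch⁻¹ ≤ ψ x := fun x => inv_anti₀ (hpos x) (hhC x)
  have hψub : ∀ x, ψ x ≤ c⁻¹ := fun x => inv_anti₀ hc (hch x)
  have hψD : HolderConst α (Dh / (c * c)) ψ := by
    intro x y
    have hxy : ψ x - ψ y = (h y - h x) / (h x * h y) := by
      have hxne := (hpos x).ne'
      have hyne := (hpos y).ne'
      rw [hψ]
      field_simp
    rw [hxy, abs_div, abs_of_pos (mul_pos (hpos x) (hpos y))]
    have hnum : |h y - h x| ≤ Dh * dX x y ^ α := by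
      have := hDh y x
      rwa [dX_symm y x] at this
    have hden : c * c ≤ h x * h y :=
      mul_le_mul (hch x) (hch y) hc.le (hpos x).le
    calc |h y - h x| / (h x * h y) ≤ (Dh * dX x y ^ α) / (c * c) :=
          div_le_div₀ (mul_nonneg (le_max_right Dh0 0) (dX_rpow_nonneg α x y)) hnum
            (by positivity) hden
      _ = Dh / (c * c) * dX x y ^ α := by ring
  have ureg : ∀ n, Continuous (u n) ∧ (∀ x, Ch⁻¹ ≤ u n x) ∧ (∀ x, u n x ≤ c⁻¹) :=
    fun n => hD.TT_iter_reg ψ Ch⁻¹ c⁻¹ hψc hψlb hψub n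
  have hChinv : (0:ℝ) < Ch⁻¹ := inv_pos.2 (lt_of_lt_of_le hc (le_trans (hch _) (hhC (Classical.arbitrary _))))
  have hu_succ : ∀ n, u (n + 1) = T (u n) := fun n => Function.iterate_succ_apply' T n ψ
  have hAb : ∀ n z, |u n z| ≤ max |Ch⁻¹| |c⁻¹| :=
    fun n => abs_le_max_of_between ((ureg n).2.1) ((ureg n).2.2)
  -- sup and inf sequences
  set ms : ℕ → ℝ := fun n => ⨅ x, u n x with hms
  set Ms : ℕ → ℝ := fun n => ⨆ x, u n x with hMs
  have hbddb : ∀ n, BddBelow (Set.range (u n)) :=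
    fun n => ⟨Ch⁻¹, by rintro v ⟨x, rfl⟩; exact (ureg n).2.1 x⟩
  have hbdda : ∀ n, BddAbove (Set.range (u n)) :=
    fun n => ⟨c⁻¹, by rintro v ⟨x, rfl⟩; exact (ureg n).2.2 x⟩
  have hmle : ∀ n x, ms n ≤ u n x := fun n x => ciInf_le (hbddb n) x
  have hMge : ∀ n x, u n x ≤ Ms n := fun n x => le_ciSup (hbdda n) x
  have hmlb : ∀ n, Ch⁻¹ ≤ ms n := fun n => le_ciInf ((ureg n).2.1)
  have hMub : ∀ n, Ms n ≤ c⁻¹ := fun n => ciSup_le ((ureg n).2.2)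
  have hmM : ∀ n, ms n ≤ Ms n :=
    fun n => le_trans (hmle n (Classical.arbitrary _)) (hMge n (Classical.arbitrary _))
  have hm_mono : Monotone ms := by
    apply monotone_nat_of_le_succ
    intro n
    apply le_ciInf
    intro x
    rw [hu_succ n]
    exact hD.TT_ge (u n) (ms n) (Ms n) (ureg n).1 (hmle n) (hMge n) x
  have hM_anti : Antitone Ms := by
    apply antitone_nat_of_succ_le
    intro n
    apply ciSup_le
    intro x
    rw [hu_succ n]
    exact hD.TT_le (u n) (ms n) (Ms n) (ureg n).1 (hmle n) (hMge n) x
  have hΔ0 : ∀ n, 0 ≤ Ms n - ms n := fun n => by linarith [hmM n]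
  have hΔanti : ∀ n j, Ms (n + j) - ms (n + j) ≤ Ms n - ms n := fun n j => by
    have h1 := hm_mono (Nat.le_add_right n j)
    have h2 := hM_anti (Nat.le_add_right n j)
    linarith
  -- integral invariance
  have hint : ∀ n, (∫ x, u n x * h x ∂ν) = 1 := by
    intro n
    induction n with
    | zero =>
      have e : ∀ x : ℕ → E, u 0 x * h x = 1 := fun x => by
        simp only [hu, hψ, Function.iterate_zero, id_eq]
        exact inv_mul_cancel₀ (hpos x).ne'
      rw [integral_congr_ae (Filter.Eventually.of_forall e)]
      simp
    | succ n ih =>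
      have hcb : MemCb (fun y => h y * u n y) := by
        refine ⟨hhc.mul (ureg n).1, ⟨Ch * max |Ch⁻¹| |c⁻¹|, fun z => ?_⟩⟩
        rw [abs_mul]
        exact mul_le_mul (by rw [abs_of_pos (hpos z)]; exact hhC z) (hAb n z)
          (abs_nonneg _) (le_trans hc.le (le_trans (hch z) (hhC z)))
      have hid : ∀ x, u (n + 1) x * h x
          = lam⁻¹ * ruelle p f (fun y => h y * u n y) x := by
        intro x
        rw [hu_succ n]
        have hr := hD.ruelle_TT (u n) x
        rw [hr]
        field_simp
        ring
      rw [integral_congr_ae (Filter.Eventually.of_forall hid),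
        MeasureTheory.integral_const_mul, hconf _ hcb]
      rw [show (∫ x, h x * u n x ∂ν) = ∫ x, u n x * h x ∂ν from
        integral_congr_ae (Filter.Eventually.of_forall fun x => mul_comm _ _), ih]
      field_simp
  -- ν-integrability of continuous bounded functions
  have integrableX : ∀ (g : (ℕ → E) → ℝ) (Mg : ℝ), Continuous g → (∀ z, |g z| ≤ Mg) →
      Integrable g ν := by
    intro g Mg hg hb
    refine ⟨hg.aestronglyMeasurable, ?_⟩
    apply MeasureTheory.HasFiniteIntegral.of_bounded (C := Mg)
    exact Filter.Eventually.of_forall fun z => by rw [Real.norm_eq_abs]; exact hb z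
  have h1mem : ∀ n, ms n ≤ 1 ∧ 1 ≤ Ms n := by
    intro n
    have hgint : Integrable (fun x => u n x * h x) ν := by
      apply integrableX _ (max |Ch⁻¹| |c⁻¹| * Ch) ((ureg n).1.mul hhc)
      intro z
      rw [Pi.mul_apply]
      rw [abs_mul]
      exact mul_le_mul (hAb n z) (by rw [abs_of_pos (hpos z)]; exact hhC z)
        (abs_nonneg _) (le_trans (abs_nonneg _) (hAb n z))
    have hhint : Integrable h ν := by
      apply integrableX _ Ch hhc
      intro z
      rw [abs_of_pos (hpos z)]; exact hhC z
    constructor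
    · have : (∫ x, ms n * h x ∂ν) ≤ ∫ x, u n x * h x ∂ν := by
        apply integral_mono (hhint.const_mul (ms n)) hgint
        intro x
        exact mul_le_mul_of_nonneg_right (hmle n x) (hpos x).le
      rw [MeasureTheory.integral_const_mul, hnorm, hint n] at this
      linarith
    · have : (∫ x, u n x * h x ∂ν) ≤ ∫ x, Ms n * h x ∂ν := by
        apply integral_mono hgint (hhint.const_mul (Ms n))
        intro x
        exact mul_le_mul_of_nonneg_right (hMge n x) (hpos x).le
      rw [MeasureTheory.integral_const_mul, hnorm, hint n] at this
      linarith
  -- Hölder constants of the iterates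
  set Kc := Gc α Df Dh c * Real.exp (Gc α Df Dh c) with hKc
  have hKc0 : 0 ≤ Kc := mul_nonneg hD.Gc_nonneg (Real.exp_pos _).le
  set Dseq : ℕ → ℝ := fun n => Nat.rec (motive := fun _ => ℝ) (Dh / (c * c))
    (fun k Dk => βe α * Dk + (Ms k - ms k) * Kc) n with hDseqdef
  have hDseq_succ : ∀ k, Dseq (k + 1) = βe α * Dseq k + (Ms k - ms k) * Kc := fun k => rfl
  have hshift : ∀ n, (∀ y, 0 ≤ u n y + -(ms n)) ∧ (∀ y, u n y + -(ms n) ≤ Ms n - ms n)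
      ∧ Continuous (fun y => u n y + -(ms n)) := by
    intro n
    exact ⟨fun y => by linarith [hmle n y], fun y => by linarith [hMge n y],
      (ureg n).1.add continuous_const⟩
  have hshift_abs : ∀ n y, |u n y + -(ms n)| ≤ Ms n - ms n := by
    intro n y
    rw [abs_of_nonneg ((hshift n).1 y)]
    exact (hshift n).2.1 y
  have hshiftHol : ∀ n D', HolderConst α D' (u n) →
      HolderConst α D' (fun y => u n y + -(ms n)) := by
    intro n D' hH x y
    simpa [add_sub_add_right_eq_sub] using hH x y
  have hTshift : ∀ n N, ∀ z, T^[N] (fun y => u n y + -(ms n)) z = u (n + N) z + -(ms n) := by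
    intro n N
    induction N with
    | zero => intro z; simp
    | succ N ihN =>
      intro z
      rw [Function.iterate_succ_apply',
        show T^[N] (fun y => u n y + -(ms n)) = fun z => u (n + N) z + -(ms n) from funext ihN,
        hT, hD.TT_add_const (u (n + N)) (max |Ch⁻¹| |c⁻¹|) (-(ms n)) (ureg (n + N)).1
          (hAb (n + N)) z, ← hT, ← hu_succ (n + N)]
      rfl
  have hDseqH : ∀ n, HolderConst α (Dseq n) (u n) ∧ 0 ≤ Dseq n := by
    intro n
    induction n with
    | zero =>
      refine ⟨hψD, div_nonneg (le_max_right Dh0 0) (by positivity)⟩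
    | succ n ih =>
      constructor
      · have hHolstep := hD.TT_holder (fun y => u n y + -(ms n)) (Ms n - ms n) (Dseq n)
          (hshift n).2.2 (hshift_abs n) (hshiftHol n (Dseq n) ih.1) ih.2 (hΔ0 n)
        rw [← hKc] at hHolstep
        intro x y
        have hxval : ∀ z, TT p f h lam (fun y => u n y + -(ms n)) z
            = u (n + 1) z + -(ms n) := by
          intro z
          have h5 := hTshift n 1 z
          rw [Function.iterate_one, hT] at h5
          exact h5
        have h2 := hHolstep x y
        rw [hxval x, hxval y] at h2
        rw [hDseq_succ n]
        simpa [add_sub_add_right_eq_sub] using h2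
      · rw [hDseq_succ n]
        have h6 := mul_nonneg (hΔ0 n) hKc0
        have h7 := mul_nonneg (βe_pos α).le ih.2
        linarith
  -- Doeblin contraction over blocks
  set δ := Real.exp (-(cinf α Df Dh c)) with hδ
  have hδpos : 0 < δ := Real.exp_pos _
  have hδle : δ ≤ 1 := Real.exp_le_one_iff.2 (by linarith [hD.cinf_nonneg])
  have hblock : ∀ n N, Ms (n + N) - ms (n + N)
      ≤ (1 - δ) * (Ms n - ms n) + Dseq n * βe α ^ N := by
    intro n N
    have hdoe := hD.TT_doeblin (fun y => u n y + -(ms n)) (Ms n - ms n) (Dseq n)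
      (hshift n).2.2 (hshift n).1 (hshift n).2.1 (hshiftHol n _ (hDseqH n).1) (hDseqH n).2 N
    have hwk : ∀ x y : ℕ → E, δ * (u (n + N) y - ms n) - Dseq n * βe α ^ N
        ≤ u (n + N) x - ms n := by
      intro x y
      have hde := hdoe x y
      rw [← hT, hTshift n N x, hTshift n N y] at hde
      have ht0 : 0 ≤ dX x y ^ α := dX_rpow_nonneg α x y
      have ht1 : dX x y ^ α ≤ 1 := dX_rpow_le_one hα0 x y
      have hey : δ ≤ Real.exp (-(cinf α Df Dh c * dX x y ^ α)) := by
        rw [hδ]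
        apply Real.exp_le_exp.2
        nlinarith [hD.cinf_nonneg]
      have huy0 : 0 ≤ u (n + N) y - ms n := by
        have h8 := hm_mono (Nat.le_add_right n N)
        linarith [hmle (n + N) y]
      have hterm : Dseq n * βe α ^ N * dX x y ^ α ≤ Dseq n * βe α ^ N := by
        have h0' : 0 ≤ Dseq n * βe α ^ N :=
          mul_nonneg (hDseqH n).2 (pow_nonneg (βe_pos α).le N)
        nlinarith
      have hmul : δ * (u (n + N) y - ms n)
          ≤ Real.exp (-(cinf α Df Dh c * dX x y ^ α)) * (u (n + N) y - ms n) :=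
        mul_le_mul_of_nonneg_right hey huy0
      nlinarith [hde]
    have hinf : ∀ y : ℕ → E, δ * (u (n + N) y - ms n) - Dseq n * βe α ^ N + ms n
        ≤ ms (n + N) := by
      intro y
      apply le_ciInf
      intro x
      linarith [hwk x y]
    have hsup : Ms (n + N) ≤ (ms (n + N) - ms n + Dseq n * βe α ^ N) / δ + ms n := by
      apply ciSup_le
      intro y
      have h2 : u (n + N) y - ms n ≤ (ms (n + N) - ms n + Dseq n * βe α ^ N) / δ := by
        rw [le_div_iff₀ hδpos]
        nlinarith [hinf y]
      linarith
    have hfin : δ * (Ms (n + N) - ms n) ≤ ms (n + N) - ms n + Dseq n * βe α ^ N := by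
      have h2 : Ms (n + N) - ms n ≤ (ms (n + N) - ms n + Dseq n * βe α ^ N) / δ := by
        linarith [hsup]
      have h3 := (le_div_iff₀ hδpos).1 h2
      nlinarith [h3]
    have hMle := hM_anti (Nat.le_add_right n N)
    have hc2 : (1 - δ) * (Ms (n + N) - ms n) ≤ (1 - δ) * (Ms n - ms n) :=
      mul_le_mul_of_nonneg_left (by linarith) (by linarith)
    nlinarith [hfin, hc2]
  -- Hölder decay over blocks
  set Kc' := Kc / (1 - βe α) with hKc'
  have hβ1 : βe α < 1 := βe_lt_one hα0
  have hKc'0 : 0 ≤ Kc' := div_nonneg hKc0 (by linarith)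
  have hDblock : ∀ n j, Dseq (n + j) ≤ βe α ^ j * Dseq n + Kc' * (Ms n - ms n) := by
    intro n j
    induction j with
    | zero =>
      simp only [Nat.add_zero, pow_zero, one_mul]
      nlinarith [mul_nonneg hKc'0 (hΔ0 n)]
    | succ j ihj =>
      rw [show n + (j + 1) = (n + j) + 1 from rfl, hDseq_succ (n + j)]
      have hkey : (Ms (n + j) - ms (n + j)) * Kc ≤ (Ms n - ms n) * Kc :=
        mul_le_mul_of_nonneg_right (hΔanti n j) hKc0
      have hmul := mul_le_mul_of_nonneg_left ihj (βe_pos α).le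
      have hKid : βe α * Kc' + Kc = Kc' := by
        rw [hKc']
        have hne : 1 - βe α ≠ 0 := by linarith
        field_simp
        ring
      calc βe α * Dseq (n + j) + (Ms (n + j) - ms (n + j)) * Kc
          ≤ βe α * (βe α ^ j * Dseq n + Kc' * (Ms n - ms n)) + (Ms n - ms n) * Kc := by
            nlinarith [hmul, hkey]
        _ = βe α ^ (j + 1) * Dseq n + (βe α * Kc' + Kc) * (Ms n - ms n) := by
            rw [pow_succ]; ring
        _ = βe α ^ (j + 1) * Dseq n + Kc' * (Ms n - ms n) := by rw [hKid]
  -- choice of the block length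
  set K2 := max Kc' 1 with hK2
  have hK2pos : 0 < K2 := lt_of_lt_of_le one_pos (le_max_right _ _)
  set γ := δ / (2 * K2) with hγ
  have hγpos : 0 < γ := div_pos hδpos (by linarith)
  set ρ := 1 - δ / 2 with hρ
  have hρpos : 0 < ρ := by rw [hρ]; linarith
  have hρlt1 : ρ < 1 := by rw [hρ]; linarith
  obtain ⟨N0, hN0⟩ := exists_pow_lt_of_lt_one
    (show (0:ℝ) < ρ * γ / (1 + γ) by positivity) hβ1
  set N := N0 + 1 with hN
  have hNpos : 0 < N := Nat.succ_pos N0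
  have hNβ : βe α ^ N * (1 + γ) ≤ ρ * γ := by
    have h1 : βe α ^ N ≤ βe α ^ N0 :=
      pow_le_pow_of_le_one (βe_pos α).le hβ1.le (Nat.le_succ N0)
    have h2 : βe α ^ N < ρ * γ / (1 + γ) := lt_of_le_of_lt h1 hN0
    have h3 := (lt_div_iff₀ (show (0:ℝ) < 1 + γ by positivity)).1 h2
    linarith
  have hγK : γ * Kc' ≤ δ / 2 := by
    have hKK : γ * K2 = δ / 2 := by
      rw [hγ]
      field_simp
    have hKle : Kc' ≤ K2 := le_max_left _ _
    nlinarith [hγpos.le]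
  -- geometric decay of the Lyapunov function along blocks
  set V0 := (Ms 0 - ms 0) + γ * Dseq 0 with hV0
  have hV00 : 0 ≤ V0 := by
    have h1 := hΔ0 0
    have h2 := (hDseqH 0).2
    nlinarith [hγpos.le]
  have hV : ∀ t : ℕ, (Ms (t * N) - ms (t * N)) + γ * Dseq (t * N) ≤ ρ ^ t * V0 := by
    intro t
    induction t with
    | zero => simp [Nat.zero_mul, hV0]
    | succ t iht =>
      have e1 : (t + 1) * N = t * N + N := by rw [Nat.succ_mul]
      rw [e1]
      have h1 := hblock (t * N) N
      have h2 := hDblock (t * N) N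
      have h2' := mul_le_mul_of_nonneg_left h2 hγpos.le
      have hΔt0 := hΔ0 (t * N)
      have hDt0 := (hDseqH (t * N)).2
      have c1 : (1 - δ + γ * Kc') ≤ ρ := by rw [hρ]; linarith
      have c1' := mul_le_mul_of_nonneg_right c1 hΔt0
      have c2' := mul_le_mul_of_nonneg_right hNβ hDt0
      have hstep : (Ms (t * N + N) - ms (t * N + N)) + γ * Dseq (t * N + N)
          ≤ ρ * ((Ms (t * N) - ms (t * N)) + γ * Dseq (t * N)) := by
        nlinarith [h1, h2', c1', c2']
      calc (Ms (t * N + N) - ms (t * N + N)) + γ * Dseq (t * N + N)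
          ≤ ρ * ((Ms (t * N) - ms (t * N)) + γ * Dseq (t * N)) := hstep
        _ ≤ ρ * (ρ ^ t * V0) := mul_le_mul_of_nonneg_left iht hρpos.le
        _ = ρ ^ (t + 1) * V0 := by rw [pow_succ]; ring
  -- geometric decay of the oscillation
  set s := ρ ^ ((1:ℝ) / N) with hs
  have hs0 : 0 < s := Real.rpow_pos_of_pos hρpos _
  have hs1 : s < 1 := Real.rpow_lt_one hρpos.le hρlt1 (by positivity)
  have hNR : (0:ℝ) < (N:ℝ) := Nat.cast_pos.2 hNpos
  have hΔbound : ∀ n, Ms n - ms n ≤ (V0 / ρ) * s ^ n := by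
    intro n
    have ht : n / N * N ≤ n := Nat.div_mul_le_self n N
    have h1 : Ms n - ms n ≤ Ms (n / N * N) - ms (n / N * N) := by
      have h9 := hΔanti (n / N * N) (n - n / N * N)
      rwa [Nat.add_sub_cancel' ht] at h9
    have h3 : Ms n - ms n ≤ ρ ^ (n / N) * V0 := by
      have hγD := mul_nonneg hγpos.le (hDseqH (n / N * N)).2
      have h2 := hV (n / N)
      linarith
    have h4 : n < (n / N + 1) * N := by
      calc n = N * (n / N) + n % N := (Nat.div_add_mod n N).symm
        _ < N * (n / N) + N := Nat.add_lt_add_left (Nat.mod_lt n hNpos) _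
        _ = (n / N + 1) * N := by ring
    have hle : (n:ℝ) / N ≤ ((n / N : ℕ) : ℝ) + 1 := by
      rw [div_le_iff₀ hNR]
      have h5 : (n:ℝ) < (((n / N : ℕ) : ℝ) + 1) * (N:ℝ) := by exact_mod_cast h4
      linarith
    have hexp1 : ρ ^ ((n:ℝ) / N) = s ^ n := by
      rw [hs, ← Real.rpow_natCast (ρ ^ ((1:ℝ) / N)) n, ← Real.rpow_mul hρpos.le]
      congr 1
      field_simp
    have hexp2 : ρ ^ (n / N : ℕ) * ρ ≤ ρ ^ ((n:ℝ) / N) := by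
      have h6 := Real.rpow_le_rpow_of_exponent_ge hρpos hρlt1.le hle
      rw [Real.rpow_add hρpos, Real.rpow_natCast, Real.rpow_one] at h6
      exact h6
    calc Ms n - ms n ≤ ρ ^ (n / N) * V0 := h3
      _ = (ρ ^ (n / N : ℕ) * ρ) * (V0 / ρ) := by field_simp
      _ ≤ ρ ^ ((n:ℝ) / N) * (V0 / ρ) :=
          mul_le_mul_of_nonneg_right hexp2 (div_nonneg hV00 hρpos.le)
      _ = (V0 / ρ) * s ^ n := by rw [hexp1]; ring
  -- conclusion, part 1
  set Cb := max (V0 / ρ / 2) 1 with hCb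
  have hCbpos : (0:ℝ) < Cb := lt_of_lt_of_le one_pos (le_max_right _ _)
  have habs1 : ∀ n x, |u n x - 1| ≤ 2 * Cb * s ^ n := by
    intro n x
    have hm1 := (h1mem n).1
    have hM1 := (h1mem n).2
    have h2 : |u n x - 1| ≤ Ms n - ms n := by
      rw [abs_le]
      exact ⟨by linarith [hmle n x], by linarith [hMge n x]⟩
    have h3 : V0 / ρ ≤ 2 * Cb := by
      have h7 := le_max_left (V0 / ρ / 2) 1
      linarith
    have hsn : (0:ℝ) ≤ s ^ n := pow_nonneg hs0.le n
    calc |u n x - 1| ≤ Ms n - ms n := h2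
      _ ≤ (V0 / ρ) * s ^ n := hΔbound n
      _ ≤ (2 * Cb) * s ^ n := mul_le_mul_of_nonneg_right h3 hsn
      _ = 2 * Cb * s ^ n := by ring
  have ruelle_smul : ∀ (r : ℝ) (g : (ℕ → E) → ℝ) (x : ℕ → E),
      ruelle p f (fun y => r * g y) x = r * ruelle p f g x := by
    intro r g x
    show (∫ a, Real.exp (f (cons a x)) * (r * g (cons a x)) ∂p)
      = r * ∫ a, Real.exp (f (cons a x)) * g (cons a x) ∂p
    rw [← MeasureTheory.integral_const_mul]
    exact integral_congr_ae (Filter.Eventually.of_forall fun a => by ring)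
  have hiter : ∀ n x, (ruelle p f)^[n] (fun _ => 1) x = lam ^ n * h x * u n x := by
    intro n
    induction n with
    | zero =>
      intro x
      simp only [Function.iterate_zero, id_eq, pow_zero, one_mul]
      rw [show u 0 x = (h x)⁻¹ from rfl, mul_inv_cancel₀ (hpos x).ne']
    | succ n ihn =>
      intro x
      rw [Function.iterate_succ_apply',
        show (ruelle p f)^[n] (fun _ => 1) = fun y => lam ^ n * (h y * u n y) from
          funext (fun y => by rw [ihn y]; ring),
        ruelle_smul (lam ^ n) (fun y => h y * u n y) x, hD.ruelle_TT (u n) x,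
        ← hT, ← hu_succ n]
      ring
  have hratio : ∀ n x, (ruelle p f)^[n] (fun _ => 1) x / (lam ^ n * h x) = u n x := by
    intro n x
    have hne : lam ^ n * h x ≠ 0 := (mul_pos (pow_pos hlam n) (hpos x)).ne'
    rw [hiter n x]
    exact mul_div_cancel_left₀ _ hne
  refine ⟨⟨Cb, s, hCbpos, hs0, hs1, fun n x => ?_⟩, ?_⟩
  · rw [hratio n x]
    have h9 := abs_le.1 (habs1 n x)
    exact ⟨by linarith [h9.1], by linarith [h9.2]⟩
  -- part 2 : the logarithmic limit
  intro x
  have hux : ∀ n, Ch⁻¹ ≤ u n x := fun n => (ureg n).2.1 x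
  have huxu : ∀ n, u n x ≤ c⁻¹ := fun n => (ureg n).2.2 x
  have hvpos : ∀ n, 0 < h x * u n x :=
    fun n => mul_pos (hpos x) (lt_of_lt_of_le hChinv (hux n))
  have hlopos : (0:ℝ) < c * Ch⁻¹ := mul_pos hc hChinv
  have hlov : ∀ n, c * Ch⁻¹ ≤ h x * u n x := fun n =>
    mul_le_mul (hch x) (hux n) hChinv.le (le_trans hc.le (hch x))
  have hhiv : ∀ n, h x * u n x ≤ Ch * c⁻¹ := fun n =>
    mul_le_mul (hhC x) (huxu n) (le_trans hChinv.le (hux n))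
      (le_trans hc.le (le_trans (hch x) (hhC x)))
  set Blog := max |Real.log (c * Ch⁻¹)| |Real.log (Ch * c⁻¹)| with hBlogdef
  have hlogb : ∀ n, |Real.log (h x * u n x)| ≤ Blog := by
    intro n
    rw [abs_le]
    constructor
    · have h9 := Real.log_le_log hlopos (hlov n)
      calc -Blog ≤ -|Real.log (c * Ch⁻¹)| := neg_le_neg (le_max_left _ _)
        _ ≤ Real.log (c * Ch⁻¹) := neg_abs_le _
        _ ≤ _ := h9
    · have h9 := Real.log_le_log (hvpos n) (hhiv n)
      calc Real.log (h x * u n x) ≤ Real.log (Ch * c⁻¹) := h9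
        _ ≤ |Real.log (Ch * c⁻¹)| := le_abs_self _
        _ ≤ Blog := le_max_right _ _
  have hg0 : Tendsto (fun n : ℕ => (1 / (n:ℝ)) * Real.log (h x * u n x)) atTop (nhds 0) := by
    apply squeeze_zero_norm' _ (tendsto_const_div_atTop_nhds_zero_nat Blog)
    refine Filter.eventually_atTop.2 ⟨1, fun n hn => ?_⟩
    have hn0 : (0:ℝ) < (n:ℝ) := Nat.cast_pos.2 (by omega)
    rw [Real.norm_eq_abs, abs_mul, abs_of_nonneg (by positivity : (0:ℝ) ≤ 1 / (n:ℝ))]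
    calc (1 / (n:ℝ)) * |Real.log (h x * u n x)| ≤ (1 / (n:ℝ)) * Blog :=
          mul_le_mul_of_nonneg_left (hlogb n) (by positivity)
      _ = Blog / n := by ring
  have hfinal : Tendsto (fun n : ℕ => Real.log lam + (1 / (n:ℝ)) * Real.log (h x * u n x))
      atTop (nhds (Real.log lam)) := by
    have h9 := Tendsto.add (tendsto_const_nhds (x := Real.log lam)
      (f := atTop (α := ℕ))) hg0
    rwa [add_zero] at h9
  apply Tendsto.congr' _ hfinal
  refine Filter.eventually_atTop.2 ⟨1, fun n hn => ?_⟩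
  have hnne : (n:ℝ) ≠ 0 := Nat.cast_ne_zero.2 (by omega)
  beta_reduce
  rw [hiter n x]
  have hl1 : lam ^ n * h x * u n x = lam ^ n * (h x * u n x) := by ring
  rw [hl1, Real.log_mul (by positivity) (hvpos n).ne', Real.log_pow]
  field_simp
end
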